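/- The flat torus immersion φ(u,v) = a(cosh u, sinh u, cos v, sin v) into the Minkowski space E⁴₁ (with one time-like coordinate, a > 0) is a space-like surface with flat induced metric, has parallel mean curvature vector, and its mean curvature vector is light-like at every point (i.e., the surface is marginally trapped). -/

import Mathlib

open Real

/-- The Minkowski inner product of index 1 on ℝ⁴ (the metric of E⁴₁). -/
noncomputable def mink (x y : Fin 4 → ℝ) : ℝ :=
  -(x 0 * y 0) + x 1 * y 1 + x 2 * y 2 + x 3 * y 3

/-- The flat torus immersion φ(u,v) = a(cosh u, sinh u, cos v, sin v) into E⁴₁. -/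
noncomputable def phi9 (a : ℝ) (p : ℝ × ℝ) : Fin 4 → ℝ :=
  ![a * Real.cosh p.1, a * Real.sinh p.1, a * Real.cos p.2, a * Real.sin p.2]

lemma hasFDerivAt_vec4 {f0 f1 f2 f3 : ℝ × ℝ → ℝ} {L0 L1 L2 L3 : ℝ × ℝ →L[ℝ] ℝ} {q : ℝ × ℝ}
    (h0 : HasFDerivAt f0 L0 q) (h1 : HasFDerivAt f1 L1 q)
    (h2 : HasFDerivAt f2 L2 q) (h3 : HasFDerivAt f3 L3 q) :
    HasFDerivAt (fun x => (![f0 x, f1 x, f2 x, f3 x] : Fin 4 → ℝ))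
      (ContinuousLinearMap.pi ![L0, L1, L2, L3]) q := by
  have key : HasFDerivAt (fun x i => (![f0, f1, f2, f3] : Fin 4 → ℝ × ℝ → ℝ) i x)
      (ContinuousLinearMap.pi ![L0, L1, L2, L3]) q :=
    hasFDerivAt_pi.2 (fun i => by fin_cases i <;> assumption)
  convert key using 2 with x
  ext i
  fin_cases i <;> rfl

open ContinuousLinearMap in
lemma hasFDerivAt_phi9 (a : ℝ) (q : ℝ × ℝ) :
    HasFDerivAt (phi9 a)
      (ContinuousLinearMap.pi ![a • (Real.sinh q.1 • fst ℝ ℝ ℝ), a • (Real.cosh q.1 • fst ℝ ℝ ℝ),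
        a • (-Real.sin q.2 • snd ℝ ℝ ℝ), a • (Real.cos q.2 • snd ℝ ℝ ℝ)]) q := by
  unfold phi9
  exact hasFDerivAt_vec4
    ((hasFDerivAt_fst.cosh).const_mul a)
    ((hasFDerivAt_fst.sinh).const_mul a)
    ((hasFDerivAt_snd.cos).const_mul a)
    ((hasFDerivAt_snd.sin).const_mul a)

lemma du_eq (a : ℝ) : (fun q : ℝ × ℝ => fderiv ℝ (phi9 a) q (1, 0)) =
    fun q => (![a * Real.sinh q.1, a * Real.cosh q.1, 0, 0] : Fin 4 → ℝ) := by
  funext q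
  rw [(hasFDerivAt_phi9 a q).fderiv]
  ext i
  fin_cases i <;> simp

lemma dv_eq (a : ℝ) : (fun q : ℝ × ℝ => fderiv ℝ (phi9 a) q (0, 1)) =
    fun q => (![0, 0, -(a * Real.sin q.2), a * Real.cos q.2] : Fin 4 → ℝ) := by
  funext q
  rw [(hasFDerivAt_phi9 a q).fderiv]
  ext i
  fin_cases i <;> simp <;> ring

open ContinuousLinearMap in
lemma hasFDerivAt_du (a : ℝ) (q : ℝ × ℝ) :
    HasFDerivAt (fun x : ℝ × ℝ => (![a * Real.sinh x.1, a * Real.cosh x.1, 0, 0] : Fin 4 → ℝ))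
      (ContinuousLinearMap.pi ![a • (Real.cosh q.1 • fst ℝ ℝ ℝ), a • (Real.sinh q.1 • fst ℝ ℝ ℝ),
        0, 0]) q :=
  hasFDerivAt_vec4
    ((hasFDerivAt_fst.sinh).const_mul a)
    ((hasFDerivAt_fst.cosh).const_mul a)
    (hasFDerivAt_const 0 q)
    (hasFDerivAt_const 0 q)

open ContinuousLinearMap in
lemma hasFDerivAt_dv (a : ℝ) (q : ℝ × ℝ) :
    HasFDerivAt (fun x : ℝ × ℝ => (![0, 0, -(a * Real.sin x.2), a * Real.cos x.2] : Fin 4 → ℝ))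
      (ContinuousLinearMap.pi ![0, 0, -(a • (Real.cos q.2 • snd ℝ ℝ ℝ)),
        a • (-Real.sin q.2 • snd ℝ ℝ ℝ)]) q :=
  hasFDerivAt_vec4
    (hasFDerivAt_const 0 q)
    (hasFDerivAt_const 0 q)
    ((hasFDerivAt_snd.sin).const_mul a).neg
    ((hasFDerivAt_snd.cos).const_mul a)

open ContinuousLinearMap in
lemma hasFDerivAt_H (a : ℝ) (q : ℝ × ℝ) :
    HasFDerivAt (fun x : ℝ × ℝ => (![Real.cosh x.1 / (2 * a), Real.sinh x.1 / (2 * a),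
        -(Real.cos x.2 / (2 * a)), -(Real.sin x.2 / (2 * a))] : Fin 4 → ℝ))
      (ContinuousLinearMap.pi ![(2 * a)⁻¹ • (Real.sinh q.1 • fst ℝ ℝ ℝ),
        (2 * a)⁻¹ • (Real.cosh q.1 • fst ℝ ℝ ℝ),
        -((2 * a)⁻¹ • (-Real.sin q.2 • snd ℝ ℝ ℝ)),
        -((2 * a)⁻¹ • (Real.cos q.2 • snd ℝ ℝ ℝ))]) q := by
  simp only [div_eq_mul_inv]
  exact hasFDerivAt_vec4
    (hasFDerivAt_fst.cosh.mul_const ((2 * a)⁻¹))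
    (hasFDerivAt_fst.sinh.mul_const ((2 * a)⁻¹))
    ((hasFDerivAt_snd.cos.mul_const ((2 * a)⁻¹)).neg)
    ((hasFDerivAt_snd.sin.mul_const ((2 * a)⁻¹)).neg)

/- STATEMENT 9: φ(u,v) = a(cosh u, sinh u, cos v, sin v) in E⁴₁ (a > 0) is a space-like
   surface whose induced metric is the flat metric a²(du² + dv²); its second derivatives
   φ_uu, φ_vv are normal, its mean curvature vector H = (1/(2a²))(φ_uu + φ_vv) is
   light-like and nonzero at every point (marginally trapped), and H is parallel in the
   normal connection (its partial derivatives are tangent). -/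
set_option maxHeartbeats 1600000 in
theorem stmt_9 (a : ℝ) (ha : 0 < a) (p : ℝ × ℝ) :
    let φ := phi9 a
    let Xu := fderiv ℝ φ p (1, 0)
    let Xv := fderiv ℝ φ p (0, 1)
    let Xuu := fderiv ℝ (fun q => fderiv ℝ φ q (1, 0)) p (1, 0)
    let Xvv := fderiv ℝ (fun q => fderiv ℝ φ q (0, 1)) p (0, 1)
    let H := fun q : ℝ × ℝ => (1 / (2 * a ^ 2)) •
      (fderiv ℝ (fun r => fderiv ℝ φ r (1, 0)) q (1, 0) +
       fderiv ℝ (fun r => fderiv ℝ φ r (0, 1)) q (0, 1))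
    -- induced metric a²(du² + dv²): flat and space-like
    (mink Xu Xu = a ^ 2 ∧ mink Xu Xv = 0 ∧ mink Xv Xv = a ^ 2) ∧
    (∀ c d : ℝ, (c, d) ≠ ((0 : ℝ), (0 : ℝ)) →
      0 < mink (c • Xu + d • Xv) (c • Xu + d • Xv)) ∧
    -- φ_uu and φ_vv are normal, so H is the mean curvature vector
    (mink Xuu Xu = 0 ∧ mink Xuu Xv = 0 ∧ mink Xvv Xu = 0 ∧ mink Xvv Xv = 0) ∧
    H p = (1 / (2 * a ^ 2)) • (Xuu + Xvv) ∧
    -- marginally trapped: H is light-like and nonzero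
    (mink (H p) (H p) = 0 ∧ H p ≠ 0) ∧
    -- parallel mean curvature vector: the derivatives of H are tangent
    ((∃ α β : ℝ, fderiv ℝ H p (1, 0) = α • Xu + β • Xv) ∧
     (∃ α β : ℝ, fderiv ℝ H p (0, 1) = α • Xu + β • Xv)) := by
  intro φ Xu Xv Xuu Xvv H
  have ha2 : (2 : ℝ) * a ^ 2 ≠ 0 := by positivity
  have hXu : Xu = ![a * Real.sinh p.1, a * Real.cosh p.1, 0, 0] := by
    show fderiv ℝ (phi9 a) p (1, 0) = _
    rw [show fderiv ℝ (phi9 a) p (1, 0) = (fun q : ℝ × ℝ => fderiv ℝ (phi9 a) q (1, 0)) p from rfl,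
      du_eq a]
  have hXv : Xv = ![0, 0, -(a * Real.sin p.2), a * Real.cos p.2] := by
    show fderiv ℝ (phi9 a) p (0, 1) = _
    rw [show fderiv ℝ (phi9 a) p (0, 1) = (fun q : ℝ × ℝ => fderiv ℝ (phi9 a) q (0, 1)) p from rfl,
      dv_eq a]
  have hXuu : Xuu = ![a * Real.cosh p.1, a * Real.sinh p.1, 0, 0] := by
    show fderiv ℝ (fun q : ℝ × ℝ => fderiv ℝ (phi9 a) q (1, 0)) p (1, 0) = _
    rw [du_eq a, (hasFDerivAt_du a p).fderiv]
    ext i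
    fin_cases i <;> simp
  have hXvv : Xvv = ![0, 0, -(a * Real.cos p.2), -(a * Real.sin p.2)] := by
    show fderiv ℝ (fun q : ℝ × ℝ => fderiv ℝ (phi9 a) q (0, 1)) p (0, 1) = _
    rw [dv_eq a, (hasFDerivAt_dv a p).fderiv]
    ext i
    fin_cases i <;> simp <;> ring
  have hcosh := Real.cosh_sq p.1
  have hsc := Real.sin_sq_add_cos_sq p.2
  have hHfun : H = fun q : ℝ × ℝ => (![Real.cosh q.1 / (2 * a), Real.sinh q.1 / (2 * a),
      -(Real.cos q.2 / (2 * a)), -(Real.sin q.2 / (2 * a))] : Fin 4 → ℝ) := by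
    funext q
    show (1 / (2 * a ^ 2)) •
      (fderiv ℝ (fun r : ℝ × ℝ => fderiv ℝ (phi9 a) r (1, 0)) q (1, 0) +
       fderiv ℝ (fun r : ℝ × ℝ => fderiv ℝ (phi9 a) r (0, 1)) q (0, 1)) = _
    rw [du_eq a, dv_eq a, (hasFDerivAt_du a q).fderiv, (hasFDerivAt_dv a q).fderiv]
    ext i
    fin_cases i <;>
      simp [Pi.smul_apply, smul_eq_mul] <;>
      field_simp <;> ring
  have hHp : H p = ![Real.cosh p.1 / (2 * a), Real.sinh p.1 / (2 * a),
      -(Real.cos p.2 / (2 * a)), -(Real.sin p.2 / (2 * a))] := by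
    rw [hHfun]
  refine ⟨⟨?_, ?_, ?_⟩, ?_, ⟨?_, ?_, ?_, ?_⟩, rfl, ⟨?_, ?_⟩, ?_, ?_⟩
  · rw [hXu]; simp [mink]; linear_combination a ^ 2 * hcosh
  · rw [hXu, hXv]; simp [mink]
  · rw [hXv]; simp [mink]; linear_combination a ^ 2 * hsc
  · intro c d hcd
    have hor : c ≠ 0 ∨ d ≠ 0 := by
      by_contra h
      push_neg at h
      exact hcd (by simp [h.1, h.2])
    rw [hXu, hXv]
    have hval : mink (c • ![a * Real.sinh p.1, a * Real.cosh p.1, 0, 0] +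
        d • ![0, 0, -(a * Real.sin p.2), a * Real.cos p.2])
        (c • ![a * Real.sinh p.1, a * Real.cosh p.1, 0, 0] +
        d • ![0, 0, -(a * Real.sin p.2), a * Real.cos p.2]) = c ^ 2 * a ^ 2 + d ^ 2 * a ^ 2 := by
      simp [mink, Pi.add_apply, Pi.smul_apply, smul_eq_mul]
      linear_combination c ^ 2 * a ^ 2 * hcosh + d ^ 2 * a ^ 2 * hsc
    rw [hval]
    rcases hor with hc | hd
    · have h1 : 0 < c ^ 2 * a ^ 2 := by positivity
      nlinarith [sq_nonneg d, sq_nonneg a]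
    · have h1 : 0 < d ^ 2 * a ^ 2 := by positivity
      nlinarith [sq_nonneg c, sq_nonneg a]
  · rw [hXuu, hXu]; simp [mink]; ring
  · rw [hXuu, hXv]; simp [mink]
  · rw [hXvv, hXu]; simp [mink]
  · rw [hXvv, hXv]; simp [mink]; ring
  · rw [hHp]; simp [mink]; field_simp; linear_combination (-1) * hcosh + hsc
  · rw [hHp]
    intro h
    have h0 := congrFun h 0
    simp at h0
    have := Real.cosh_pos p.1
    rcases h0 with h0 | h0 <;> nlinarith
  · refine ⟨1 / (2 * a ^ 2), 0, ?_⟩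
    rw [hHfun, (hasFDerivAt_H a p).fderiv, hXu, hXv]
    ext i
    fin_cases i <;> simp [Pi.smul_apply, smul_eq_mul] <;> field_simp <;> ring
  · refine ⟨0, -(1 / (2 * a ^ 2)), ?_⟩
    rw [hHfun, (hasFDerivAt_H a p).fderiv, hXu, hXv]
    ext i
    fin_cases i <;>
      simp only [ContinuousLinearMap.pi_apply, Matrix.cons_val_zero, Matrix.cons_val_one,
        Matrix.head_cons, Matrix.cons_val_two, Matrix.tail_cons, Matrix.cons_val_three,
        ContinuousLinearMap.neg_apply, ContinuousLinearMap.smul_apply,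
        ContinuousLinearMap.coe_fst', ContinuousLinearMap.coe_snd', Pi.add_apply,
        Pi.smul_apply, Pi.neg_apply, smul_eq_mul, Fin.zero_eta, Fin.mk_one, Fin.reduceFinMk,
        Matrix.cons_val] <;>
      field_simp <;> ring
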